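/- In the setting of the previous discretization scheme, if π^k is feasible for the full problem (g(π^k, u) ≤ 0 for all u ∈ U) and u^k maximizes the regret r(π^k, ·) over U, then r^k ≤ r^* ≤ r(π^k, u^k), where r^k = max_{u ∈ U_k} r(π^k, u) and r^* = min_{π ∈ F^*} max_{u ∈ U} r(π, u). Consequently, if the ε-termination criterion r(π^k, u^k) − r^k < ε holds, then |r^* − r^k| < ε. -/
import Mathlib


/-- Sandwich estimate: if the iterate `πk` solving the discretized problem is
feasible for the full problem and `uk` maximizes its regret over `U`, then the
discretized optimal value and the full max-regret sandwich the optimal value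
`r*`; consequently the `ε`-termination criterion guarantees `|r* - rk| < ε`. -/
theorem sandwich_and_epsilon_termination {q p m : ℕ}
    (P : Set (EuclideanSpace ℝ (Fin q)))
    (U : Set (EuclideanSpace ℝ (Fin p)))
    (r : EuclideanSpace ℝ (Fin q) → EuclideanSpace ℝ (Fin p) → ℝ)
    (g : EuclideanSpace ℝ (Fin q) → EuclideanSpace ℝ (Fin p) → Fin m → ℝ)
    (D : Set (EuclideanSpace ℝ (Fin p))) (hDfin : D.Finite) (hDU : D ⊆ U)
    (Fk : Set (EuclideanSpace ℝ (Fin q)))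
    (hFk : Fk = {π ∈ P | ∀ u ∈ D, ∀ j, g π u j ≤ 0})
    (Fstar : Set (EuclideanSpace ℝ (Fin q)))
    (hFstar : Fstar = {π ∈ P | ∀ u ∈ U, ∀ j, g π u j ≤ 0})
    (RD : EuclideanSpace ℝ (Fin q) → ℝ)
    (hRD : ∀ π', IsGreatest (r π' '' D) (RD π'))
    (Rstar : EuclideanSpace ℝ (Fin q) → ℝ)
    (hRstar : ∀ π', IsGreatest (r π' '' U) (Rstar π'))
    (rstar : ℝ) (hrstar : IsLeast (Rstar '' Fstar) rstar)
    (πk : EuclideanSpace ℝ (Fin q))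
    (hπkmin : πk ∈ Fk ∧ ∀ π' ∈ Fk, RD πk ≤ RD π')
    (hπkfeas : ∀ u ∈ U, ∀ j, g πk u j ≤ 0)
    (uk : EuclideanSpace ℝ (Fin p)) (huk : uk ∈ U)
    (hukmax : ∀ v ∈ U, r πk v ≤ r πk uk)
    (rk : ℝ) (hrk : rk = RD πk) (ε : ℝ) :
    rk ≤ rstar ∧ rstar ≤ r πk uk ∧ (r πk uk - rk < ε → |rstar - rk| < ε) := by
  have hπkFstar : πk ∈ Fstar := by
    rw [hFstar]
    refine ⟨?_, hπkfeas⟩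
    have := hπkmin.1
    rw [hFk] at this
    exact this.1
  -- Rstar πk = r πk uk
  have hRπk : Rstar πk = r πk uk := by
    have h1 := (hRstar πk).2 ⟨uk, huk, rfl⟩
    have h2 : Rstar πk ≤ r πk uk := by
      obtain ⟨v, hv, hveq⟩ := (hRstar πk).1
      rw [← hveq]; exact hukmax v hv
    linarith
  have h2 : rstar ≤ r πk uk := by
    rw [← hRπk]
    exact hrstar.2 ⟨πk, hπkFstar, rfl⟩
  have h1 : rk ≤ rstar := by
    obtain ⟨π, hπ, hπeq⟩ := hrstar.1
    have hπFk : π ∈ Fk := by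
      rw [hFstar] at hπ; rw [hFk]
      exact ⟨hπ.1, fun u hu j => hπ.2 u (hDU hu) j⟩
    have hRDle : RD π ≤ Rstar π := by
      obtain ⟨v, hv, hveq⟩ := (hRD π).1
      rw [← hveq]
      exact (hRstar π).2 ⟨v, hDU hv, rfl⟩
    rw [hrk, ← hπeq]
    exact le_trans (hπkmin.2 π hπFk) hRDle
  exact ⟨h1, h2, fun h => by rw [abs_of_nonneg (by linarith)]; linarith⟩
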